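/- For a prime number n ≥ 2, the dihedral group D_{2n} of order 2n has exactly one irredundant cover. -/

import Mathlib

open DihedralGroup

/-- A cover of a group: a finite collection of proper subgroups whose union is the group. -/
def IsCover {G : Type*} [Group G] (S : Finset (Subgroup G)) : Prop :=
  (∀ H ∈ S, H ≠ ⊤) ∧ ∀ g : G, ∃ H ∈ S, g ∈ H

/-- An irredundant cover: a cover with no proper subcollection that is also a cover. -/
def IsIrredundantCover {G : Type*} [Group G] (S : Finset (Subgroup G)) : Prop :=
  IsCover S ∧ ∀ T : Finset (Subgroup G), T ⊂ S → ¬ IsCover T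

/-- β(G): the number of irredundant covers of G. -/
noncomputable def beta (G : Type*) [Group G] : ℕ :=
  Nat.card {S : Finset (Subgroup G) // IsIrredundantCover S}

/-- A maximal cyclic subgroup: cyclic, and not contained in any strictly larger cyclic subgroup. -/
def IsMaximalCyclic {G : Type*} [Group G] (C : Subgroup G) : Prop :=
  IsCyclic ↥C ∧ ∀ D : Subgroup G, IsCyclic ↥D → C ≤ D → D = C

/-- A cyclically embedded subgroup: ⟨N, x⟩ is cyclic for all x. -/
def CyclicallyEmbedded {G : Type*} [Group G] (N : Subgroup G) : Prop :=
  ∀ x : G, IsCyclic ↥(N ⊔ Subgroup.zpowers x)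

namespace Stmt8Aux

/-- The rotation subgroup of the dihedral group. -/
def Rsub (n : ℕ) : Subgroup (DihedralGroup n) where
  carrier := {g | ∃ i, g = r i}
  one_mem' := ⟨0, one_def⟩
  mul_mem' := by
    rintro a b ⟨i, rfl⟩ ⟨j, rfl⟩
    exact ⟨i + j, (r_mul_r i j).symm⟩
  inv_mem' := by
    rintro a ⟨i, rfl⟩
    refine ⟨-i, ?_⟩
    rw [eq_comm, eq_inv_iff_mul_eq_one, r_mul_r, neg_add_cancel, one_def]

lemma mem_Rsub {n : ℕ} {g : DihedralGroup n} : g ∈ Rsub n ↔ ∃ i, g = r i := Iff.rfl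

/-- The reflection subgroup {1, sr x}. -/
def Ksub (n : ℕ) (x : ZMod n) : Subgroup (DihedralGroup n) where
  carrier := {1, sr x}
  one_mem' := Or.inl rfl
  mul_mem' := by
    rintro a b (rfl | rfl) (rfl | rfl)
    · exact Or.inl (one_mul 1)
    · rw [one_mul]; exact Or.inr rfl
    · rw [mul_one]; exact Or.inr rfl
    · exact Or.inl (sr_mul_self x)
  inv_mem' := by
    rintro a (rfl | rfl)
    · exact Or.inl inv_one
    · right
      simp only [Set.mem_singleton_iff]
      rw [eq_comm, eq_inv_iff_mul_eq_one, sr_mul_self]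

lemma mem_Ksub {n : ℕ} {x : ZMod n} {g : DihedralGroup n} :
    g ∈ Ksub n x ↔ g = 1 ∨ g = sr x := Iff.rfl

open scoped Classical in
/-- The unique irredundant cover. -/
noncomputable def S0 (n : ℕ) [NeZero n] : Finset (Subgroup (DihedralGroup n)) :=
  insert (Rsub n) (Finset.image (Ksub n) Finset.univ)

variable {n : ℕ} (hn : n.Prime)

lemma r_pow (i : ZMod n) (k : ℕ) : (r i : DihedralGroup n) ^ k = r ((k : ZMod n) * i) := by
  induction k with
  | zero => simp
  | succ k ih =>
    rw [pow_succ, ih, r_mul_r]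
    push_cast
    ring_nf

include hn in
lemma all_rot {H : Subgroup (DihedralGroup n)} {i : ZMod n} (hi : i ≠ 0)
    (hri : r i ∈ H) : ∀ j : ZMod n, r j ∈ H := by
  haveI := Fact.mk hn
  intro j
  have h1 : r j = (r i : DihedralGroup n) ^ (j * i⁻¹).val := by
    rw [r_pow, ZMod.natCast_val, ZMod.cast_id, mul_assoc, inv_mul_cancel₀ hi, mul_one]
  rw [h1]
  exact pow_mem hri _

include hn in
lemma eq_top {H : Subgroup (DihedralGroup n)} {i x : ZMod n} (hi : i ≠ 0)
    (hri : r i ∈ H) (hsx : sr x ∈ H) : H = ⊤ := by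
  have hrot := all_rot hn hi hri
  rw [Subgroup.eq_top_iff']
  rintro (j | y)
  · exact hrot j
  · have : sr y = sr x * r (y - x) := by rw [sr_mul_r]; ring_nf
    rw [this]
    exact mul_mem hsx (hrot _)

include hn in
lemma eq_Ksub {H : Subgroup (DihedralGroup n)} {x : ZMod n} (hH : H ≠ ⊤)
    (hsx : sr x ∈ H) : H = Ksub n x := by
  ext g
  rw [mem_Ksub]
  constructor
  · intro hg
    rcases g with j | y
    · rcases eq_or_ne j 0 with rfl | hj
      · exact Or.inl one_def.symm
      · exact absurd (eq_top hn hj hg hsx) hH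
    · rcases eq_or_ne y x with rfl | hy
      · exact Or.inr rfl
      · exfalso
        have hr : r (x - y) ∈ H := by
          have : r (x - y) = sr y * sr x := (sr_mul_sr y x).symm
          rw [this]; exact mul_mem hg hsx
        have hxy : x - y ≠ 0 := sub_ne_zero.mpr (Ne.symm hy)
        exact hH (eq_top hn hxy hr hsx)
  · rintro (rfl | rfl)
    · exact one_mem H
    · exact hsx

include hn in
lemma eq_Rsub {H : Subgroup (DihedralGroup n)} {i : ZMod n} (hH : H ≠ ⊤)
    (hi : i ≠ 0) (hri : r i ∈ H) : H = Rsub n := by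
  have hrot := all_rot hn hi hri
  ext g
  rw [mem_Rsub]
  constructor
  · intro hg
    rcases g with j | y
    · exact ⟨j, rfl⟩
    · exact absurd (eq_top hn hi hri hg) hH
  · rintro ⟨j, rfl⟩
    exact hrot j

include hn in
lemma one_ne_zero' : (1 : ZMod n) ≠ 0 := by
  haveI := Fact.mk hn
  exact one_ne_zero

include hn in
lemma Rsub_ne_top : Rsub n ≠ ⊤ := by
  intro h
  have : sr 0 ∈ Rsub n := h ▸ Subgroup.mem_top _
  obtain ⟨i, hi⟩ := this
  exact absurd hi (by simp)

include hn in
lemma Ksub_ne_top (x : ZMod n) : Ksub n x ≠ ⊤ := by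
  intro h
  have : r 1 ∈ Ksub n x := h ▸ Subgroup.mem_top _
  rcases this with h1 | h1
  · rw [one_def] at h1
    exact one_ne_zero' hn (by injection h1)
  · exact absurd h1 (by simp)

include hn in
lemma cover_S0 : haveI := NeZero.of_pos hn.pos; IsCover (S0 n) := by
  haveI := NeZero.of_pos hn.pos
  classical
  constructor
  · intro H hH
    simp only [S0, Finset.mem_insert, Finset.mem_image] at hH
    rcases hH with rfl | ⟨x, _, rfl⟩
    · exact Rsub_ne_top hn
    · exact Ksub_ne_top hn x
  · rintro (i | x)
    · exact ⟨Rsub n, by simp [S0], ⟨i, rfl⟩⟩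
    · exact ⟨Ksub n x, by simp [S0], Or.inr rfl⟩

include hn in
lemma S0_subset_cover {S : Finset (Subgroup (DihedralGroup n))} (hS : IsCover S) :
    haveI := NeZero.of_pos hn.pos; S0 n ⊆ S := by
  haveI := NeZero.of_pos hn.pos
  classical
  intro H hH
  simp only [S0, Finset.mem_insert, Finset.mem_image] at hH
  rcases hH with rfl | ⟨x, _, rfl⟩
  · obtain ⟨H, hHS, hmem⟩ := hS.2 (r 1)
    have := eq_Rsub hn (hS.1 H hHS) (one_ne_zero' hn) hmem
    rwa [← this]
  · obtain ⟨H, hHS, hmem⟩ := hS.2 (sr x)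
    have := eq_Ksub hn (hS.1 H hHS) hmem
    rwa [← this]

end Stmt8Aux

open Stmt8Aux in
theorem stmt8 (n : ℕ) (hn : n.Prime) : beta (DihedralGroup n) = 1 := by
  haveI := NeZero.of_pos hn.pos
  have hS0 : IsIrredundantCover (S0 n) := by
    refine ⟨cover_S0 hn, ?_⟩
    intro T hT hTc
    exact absurd (S0_subset_cover hn hTc) (not_le_of_gt hT)
  have huniq : ∀ S : Finset (Subgroup (DihedralGroup n)),
      IsIrredundantCover S → S = S0 n := by
    intro S hS
    have hsub : S0 n ⊆ S := S0_subset_cover hn hS.1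
    by_contra hne
    exact hS.2 (S0 n) (lt_of_le_of_ne hsub (Ne.symm hne)) (cover_S0 hn)
  rw [beta, Nat.card_eq_one_iff_unique]
  constructor
  · constructor
    intro a b
    ext1
    rw [huniq _ a.2, huniq _ b.2]
  · exact ⟨⟨S0 n, hS0⟩⟩
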